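/- Let G be a finite irreducible reflection group in GL(V) generated by reflections r₁,…,r_n with reflecting lines l_j = (id − r_j)(V), and let Λ be a G-invariant lattice in V of rank 2n. Then the sublattice Λ⁰ = Λ∩l₁ + … + Λ∩l_n has finite index in Λ, and each Λ ∩ l_j has rank 2. -/

import Mathlib

open Module Submodule

section Aux
variable {E : Type*} [NormedAddCommGroup E] [NormedSpace ℝ E] [FiniteDimensional ℝ E]

lemma aux_discrete_rank (L : Submodule ℤ E) [DiscreteTopology L] :
    finrank ℤ L = finrank ℝ (span ℝ (L : Set E)) := by
  set W := span ℝ (L : Set E) with hW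
  let f := W.subtype
  let L₀ := L.comap (f.restrictScalars ℤ)
  have h_img : f '' L₀ = L := by
    rw [← LinearMap.coe_restrictScalars ℤ f, ← Submodule.map_coe (f.restrictScalars ℤ),
      Submodule.map_comap_eq_self]
    exact fun x hx ↦ LinearMap.mem_range.mpr ⟨⟨x, Submodule.subset_span hx⟩, rfl⟩
  have hd : DiscreteTopology L₀ := by
    refine DiscreteTopology.preimage_of_continuous_injective (L : Set E) ?_ (injective_subtype _)
    exact LinearMap.continuous_of_finiteDimensional f
  have hz : IsZLattice ℝ L₀ := ⟨by
    rw [← (Submodule.map_injective_of_injective (injective_subtype W)).eq_iff, Submodule.map_span,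
      Submodule.map_top, range_subtype, h_img]⟩
  have h₀ : finrank ℤ L₀ = finrank ℝ W := ZLattice.rank ℝ L₀
  have hmap : L₀.map (f.restrictScalars ℤ) = L := SetLike.ext'_iff.mpr h_img
  have hinj : Function.Injective (f.restrictScalars ℤ) := injective_subtype W
  have e : L₀ ≃ₗ[ℤ] L :=
    (Submodule.equivMapOfInjective (f.restrictScalars ℤ) hinj L₀).trans (LinearEquiv.ofEq _ _ hmap)
  rw [← e.finrank_eq, h₀]

lemma aux_finrank_toIntSubmodule {M : Type*} [AddCommGroup M] (S : AddSubgroup M) :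
    finrank ℤ (AddSubgroup.toIntSubmodule S) = finrank ℤ S :=
  LinearEquiv.finrank_eq <| AddEquiv.toIntLinearEquiv
    { toFun := fun x => ⟨x.1, x.2⟩, invFun := fun x => ⟨x.1, x.2⟩,
      left_inv := fun _ => rfl, right_inv := fun _ => rfl, map_add' := fun _ _ => rfl }

omit [NormedSpace ℝ E] [FiniteDimensional ℝ E] in
lemma aux_discrete_of_le {S T : AddSubgroup E} [DiscreteTopology T] (h : S ≤ T) :
    DiscreteTopology S :=
  DiscreteTopology.of_subset (s := (T : Set E)) ‹_› h

lemma aux_discrete_toInt {M : Type*} [TopologicalSpace M] [AddCommGroup M] (S : AddSubgroup M)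
    [DiscreteTopology S] : DiscreteTopology (AddSubgroup.toIntSubmodule S) :=
  DiscreteTopology.of_subset (s := (S : Set M)) ‹_› (by rw [AddSubgroup.coe_toIntSubmodule])

end Aux

theorem stmt18 {V : Type*} [NormedAddCommGroup V] [NormedSpace ℂ V] [FiniteDimensional ℂ V]
    {n : ℕ} (hn : Module.finrank ℂ V = n) (hn1 : 1 ≤ n)
    (G : Subgroup (Module.End ℂ V)ˣ) [Finite G]
    (hirr : ∀ W : Submodule ℂ V,
      (∀ g ∈ G, ∀ v ∈ W, (g : Module.End ℂ V) v ∈ W) → W = ⊥ ∨ W = ⊤)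
    (r : Fin n → (Module.End ℂ V)ˣ) (hrG : ∀ j, r j ∈ G)
    (hgen : G = Subgroup.closure (Set.range r))
    -- each `r j` is a reflection:
    (hord : ∀ j, IsOfFinOrder (r j))
    (hker : ∀ j,
      Module.finrank ℂ (LinearMap.ker ((1 : Module.End ℂ V) - (r j : Module.End ℂ V))) = n - 1)
    (Λ : AddSubgroup V) [DiscreteTopology Λ]
    (hinv : ∀ g ∈ G, ∀ x ∈ Λ, (g : Module.End ℂ V) x ∈ Λ)
    (hrk : Module.finrank ℤ Λ = 2 * n)
    (Λj : Fin n → AddSubgroup V)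
    (hΛj : ∀ j, Λj j =
      Λ ⊓ (LinearMap.range ((1 : Module.End ℂ V) - (r j : Module.End ℂ V))).toAddSubgroup) :
    ((⨆ j, Λj j).addSubgroupOf Λ).index ≠ 0 ∧ ∀ j, Module.finrank ℤ (Λj j) = 2 := by
  classical
  -- real dimension of V
  have hdim : finrank ℝ V = 2 * n := by
    rw [← hn, ← Complex.finrank_real_complex]
    exact (Module.finrank_mul_finrank ℝ ℂ V).symm
  -- Λ as ℤ-submodule
  set M : Submodule ℤ V := AddSubgroup.toIntSubmodule Λ with hM
  have hMdisc : DiscreteTopology M := aux_discrete_toInt Λ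
  have hMspan : span ℝ (M : Set V) = ⊤ := by
    apply Submodule.eq_top_of_finrank_eq
    rw [← aux_discrete_rank M, aux_finrank_toIntSubmodule, hrk, hdim]
  have hΛspan : span ℝ ((Λ : Set V)) = ⊤ := by
    rw [← AddSubgroup.coe_toIntSubmodule Λ]; exact hMspan
  -- reflecting lines
  set Wl : Fin n → Submodule ℂ V :=
    fun j => LinearMap.range ((1 : Module.End ℂ V) - (r j : Module.End ℂ V)) with hWl
  have hWj1 : ∀ j, finrank ℂ (Wl j) = 1 := by
    intro j
    have h := LinearMap.finrank_range_add_finrank_ker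
      ((1 : Module.End ℂ V) - (r j : Module.End ℂ V))
    rw [hker j, hn] at h
    have h' : finrank ℂ (Wl j) + (n - 1) = n := h
    omega
  -- the sum of the reflecting lines is all of V
  have hGinv : ∀ g ∈ G, ∀ v ∈ ⨆ j, Wl j, (g : Module.End ℂ V) v ∈ ⨆ j, Wl j := by
      intro g hg
      rw [hgen] at hg
      induction hg using Subgroup.closure_induction with
      | mem x hx =>
        obtain ⟨j, rfl⟩ := hx
        intro v hv
        have hsub : ((1 : Module.End ℂ V) - (r j : Module.End ℂ V)) v ∈ ⨆ j, Wl j :=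
          le_iSup Wl j (LinearMap.mem_range.mpr ⟨v, rfl⟩)
        have : ((r j : Module.End ℂ V)) v
            = v - ((1 : Module.End ℂ V) - (r j : Module.End ℂ V)) v := by
          simp [LinearMap.sub_apply]
        rw [this]
        exact sub_mem hv hsub
      | one => intro v hv; simpa using hv
      | mul x y hx hy ihx ihy =>
        intro v hv
        have : ((x * y : (Module.End ℂ V)ˣ) : Module.End ℂ V) v
            = (x : Module.End ℂ V) ((y : Module.End ℂ V) v) := by
          rw [Units.val_mul, Module.End.mul_apply]
        rw [this]
        exact ihx _ (ihy _ hv)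
      | inv x hx ihx =>
        have ginj : Function.Injective (x : Module.End ℂ V) := by
          intro a b hab
          have h2 : ((x⁻¹ : (Module.End ℂ V)ˣ) : Module.End ℂ V) ((x : Module.End ℂ V) a)
              = ((x⁻¹ : (Module.End ℂ V)ˣ) : Module.End ℂ V) ((x : Module.End ℂ V) b) := by
            rw [hab]
          simpa [← Module.End.mul_apply, ← Units.val_mul, x.inv_mul] using h2
        have hle : Submodule.map (x : Module.End ℂ V) (⨆ j, Wl j) ≤ ⨆ j, Wl j := by
          rw [Submodule.map_le_iff_le_comap]
          intro v hv
          exact ihx v hv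
        have heq : Submodule.map (x : Module.End ℂ V) (⨆ j, Wl j) = ⨆ j, Wl j := by
          apply Submodule.eq_of_le_of_finrank_le hle
          exact le_of_eq (Submodule.equivMapOfInjective _ ginj _).finrank_eq
        intro v hv
        rw [← heq] at hv
        obtain ⟨w, hw, rfl⟩ := hv
        have : ((x⁻¹ : (Module.End ℂ V)ˣ) : Module.End ℂ V) ((x : Module.End ℂ V) w) = w := by
          simp [← Module.End.mul_apply, ← Units.val_mul, x.inv_mul]
        rw [this]
        exact hw
  have hWtop : (⨆ j, Wl j) = ⊤ := by
    rcases hirr (⨆ j, Wl j) hGinv with h | h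
    · exfalso
      have h1 : Wl ⟨0, hn1⟩ ≤ ⊥ := h ▸ le_iSup Wl ⟨0, hn1⟩
      have := hWj1 ⟨0, hn1⟩
      rw [le_bot_iff.mp h1] at this
      simp [finrank_bot] at this
    · exact h
  -- basic facts about the Λj
  have hΛjΛ : ∀ j, Λj j ≤ Λ := fun j => by rw [hΛj j]; exact inf_le_left
  have hsubΛ : (⨆ j, Λj j) ≤ Λ := iSup_le hΛjΛ
  have hΛjW : ∀ j, (Λj j : Set V) ⊆ (Wl j : Set V) := by
    intro j x hx
    rw [hΛj j] at hx
    exact (AddSubgroup.mem_inf.mp hx).2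
  -- the real span of Λj is the reflecting line
  have hspanΛj : ∀ j, span ℝ ((Λj j : Set V)) = (Wl j).restrictScalars ℝ := by
    intro j
    set f := (((1 : Module.End ℂ V) - (r j : Module.End ℂ V)) : V →ₗ[ℂ] V).restrictScalars ℝ
      with hf
    apply le_antisymm
    · rw [span_le]
      intro x hx
      exact hΛjW j hx
    · intro x hx
      rw [Submodule.restrictScalars_mem] at hx
      obtain ⟨y, hyx⟩ := hx
      have himg : f '' (Λ : Set V) ⊆ (Λj j : Set V) := by
        rintro z ⟨w, hw, rfl⟩
        rw [hΛj j]
        refine AddSubgroup.mem_inf.mpr ⟨?_, ?_⟩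
        · have h3 : f w = w - (r j : Module.End ℂ V) w := by
            simp [hf, LinearMap.sub_apply]
          rw [h3]
          exact sub_mem hw (hinv (r j) (hrG j) w hw)
        · exact LinearMap.mem_range.mpr ⟨w, rfl⟩
      have hy : y ∈ span ℝ (Λ : Set V) := by rw [hΛspan]; trivial
      have h1 : f y ∈ map f (span ℝ (Λ : Set V)) := Submodule.mem_map_of_mem hy
      rw [Submodule.map_span] at h1
      have hxy : f y = x := hyx
      rw [hxy] at h1
      exact span_mono himg h1
  -- the reflecting lines have real dimension 2
  have hfr2 : ∀ j, finrank ℝ ((Wl j).restrictScalars ℝ) = 2 := by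
    intro j
    have h1 := Module.finrank_mul_finrank ℝ ℂ ((Wl j).restrictScalars ℝ)
    have h2 : finrank ℂ ((Wl j).restrictScalars ℝ) = finrank ℂ (Wl j) :=
      LinearEquiv.finrank_eq (Submodule.restrictScalarsEquiv ℝ ℂ V (Wl j))
    rw [Complex.finrank_real_complex, h2, hWj1 j, mul_one] at h1
    exact h1.symm
  -- each Λj has rank 2
  have hΛjdisc : ∀ j, DiscreteTopology (Λj j) := fun j => aux_discrete_of_le (hΛjΛ j)
  have hfinΛj : ∀ j, finrank ℤ (Λj j) = 2 := by
    intro j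
    have := hΛjdisc j
    have hd2 : DiscreteTopology (AddSubgroup.toIntSubmodule (Λj j)) := aux_discrete_toInt (Λj j)
    rw [← aux_finrank_toIntSubmodule, aux_discrete_rank,
      AddSubgroup.coe_toIntSubmodule, hspanΛj j, hfr2 j]
  -- the sup of the Λj spans V over ℝ
  have hsupspan : span ℝ (((⨆ j, Λj j) : AddSubgroup V) : Set V) = ⊤ := by
    rw [eq_top_iff]
    intro x _
    have hx : x ∈ ⨆ j, Wl j := by rw [hWtop]; trivial
    refine Submodule.iSup_induction
      (motive := fun y => y ∈ span ℝ (((⨆ j, Λj j) : AddSubgroup V) : Set V)) Wl hx ?_ (zero_mem _)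
      (fun a b ha hb => add_mem ha hb)
    intro j y hy
    have h1 : y ∈ span ℝ ((Λj j : Set V)) := by rw [hspanΛj j]; exact hy
    exact span_mono (SetLike.coe_subset_coe.mpr (le_iSup Λj j)) h1
  -- the Λ⁰ lattice
  have hsupdisc : DiscreteTopology ((⨆ j, Λj j) : AddSubgroup V) := aux_discrete_of_le hsubΛ
  set N : Submodule ℤ V := AddSubgroup.toIntSubmodule (⨆ j, Λj j) with hN
  have hNdisc : DiscreteTopology N := aux_discrete_toInt _
  have hNM : N ≤ M := fun x hx => hsubΛ hx
  have hNrank : finrank ℤ N = 2 * n := by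
    rw [aux_discrete_rank N, hN, AddSubgroup.coe_toIntSubmodule, hsupspan, finrank_top, hdim]
  have hMrank : finrank ℤ M = 2 * n := by
    rw [hM, aux_finrank_toIntSubmodule]; exact hrk
  have hMfin : Module.Finite ℤ M := inferInstance
  have hNfin : Module.Finite ℤ N := inferInstance
  -- the quotient has rank zero
  set N' : Submodule ℤ M := N.comap M.subtype with hN'
  have hrkq : Module.rank ℤ (M ⧸ N') = 0 := by
    have h1 := rank_quotient_add_rank_of_isDomain N'
    have e2 : N' ≃ₗ[ℤ] N := Submodule.comapSubtypeEquivOfLe hNM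
    rw [e2.rank_eq] at h1
    have hr1 : Module.rank ℤ N = ((2 * n : ℕ) : Cardinal) := by
      rw [← Module.finrank_eq_rank ℤ N, hNrank]
    have hr2 : Module.rank ℤ M = ((2 * n : ℕ) : Cardinal) := by
      rw [← Module.finrank_eq_rank ℤ M, hMrank]
    rw [hr1, hr2] at h1
    exact Cardinal.eq_of_add_eq_add_right (h1.trans (zero_add _).symm)
      (Cardinal.nat_lt_aleph0 (2 * n))
  have hQtor := rank_eq_zero_iff.mp hrkq
  -- torsion of the quotient group
  set H := (⨆ j, Λj j).addSubgroupOf Λ with hH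
  have htor : AddMonoid.IsTorsion (Λ ⧸ H) := by
    intro q
    obtain ⟨x, rfl⟩ := QuotientAddGroup.mk'_surjective H q
    obtain ⟨a, ha0, ha⟩ := hQtor (Submodule.Quotient.mk (⟨(x : V), x.2⟩ : M))
    rw [← Submodule.Quotient.mk_smul, Submodule.Quotient.mk_eq_zero] at ha
    have haN : a • (x : V) ∈ N := by
      rw [hN', Submodule.mem_comap] at ha
      simpa using ha
    have habs : ((a.natAbs : ℤ)) • (x : V) ∈ N := by
      rcases Int.natAbs_eq a with h | h
      · rwa [← h]
      · rw [show ((a.natAbs : ℤ)) = -a by omega, neg_smul]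
        exact neg_mem haN
    refine isOfFinAddOrder_iff_nsmul_eq_zero.mpr ⟨a.natAbs, Int.natAbs_pos.mpr ha0, ?_⟩
    have hmk : (a.natAbs • (QuotientAddGroup.mk' H x)) = QuotientAddGroup.mk' H (a.natAbs • x) :=
      (map_nsmul (QuotientAddGroup.mk' H) a.natAbs x).symm
    rw [hmk, QuotientAddGroup.mk'_apply, QuotientAddGroup.eq_zero_iff,
      AddSubgroup.mem_addSubgroupOf]
    have hco : ((a.natAbs • x : Λ) : V) = (a.natAbs : ℤ) • (x : V) := by
      rw [natCast_zsmul]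
      rfl
    rw [hco]
    exact habs
  -- the quotient group is finitely generated
  have hfgM : AddGroup.FG M := Module.Finite.iff_addGroup_fg.mp hMfin
  have eMΛ : (M : Type _) ≃+ Λ :=
    { toFun := fun x => ⟨x.1, x.2⟩, invFun := fun x => ⟨x.1, x.2⟩,
      left_inv := fun _ => rfl, right_inv := fun _ => rfl, map_add' := fun _ _ => rfl }
  have hfgΛ : AddGroup.FG Λ := AddGroup.fg_of_surjective (f := eMΛ.toAddMonoidHom) eMΛ.surjective
  have hfgQ : AddGroup.FG (Λ ⧸ H) :=
    AddGroup.fg_of_surjective (f := QuotientAddGroup.mk' H) (QuotientAddGroup.mk'_surjective H)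
  have : Finite (Λ ⧸ H) := AddCommGroup.finite_of_fg_torsion _ htor
  exact ⟨AddSubgroup.index_ne_zero_of_finite, hfinΛj⟩
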